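/- Under the change of variables ζ = χ̃/χ - 1, ξ = ψ̃/ψ - 1, and η = (ζ+1)²/(ξ+1)^{2n} - 1, the evolution equation for ζ derived from the spherically symmetric Ricci flow transforms so that the evolution equation for η contains no second-order spatial derivative of ξ; explicitly, ∂_t η = -2n(n-1)[ (ψ_s²/ψ²)((ξ+1)^{-2n} - 1) + 2(ψ_s/ψ) ξ_s (ξ+1)^{-(2n+1)} + (1-(ξ+1)^{-2})/ψ² + ξ_s²(ξ+1)^{-(2n+2)} ] - 2n(n-1)((1-(ξ+1)^{-2})/ψ²) η + 2n(n-1)(ψ_s²/ψ²) η. -/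

import Mathlib

set_option maxHeartbeats 1000000 in
private lemma eta_key (N a b c p q r u v w : ℝ) (ha : a ≠ 0) (hb : b ≠ 0) (hc : c ≠ 0) :
    -2 * N * (N - 1)
        * (p ^ 2 * (1 / (c * b) - 1)
          + 2 * p * v / (c * b * b)
          + r * (1 - 1 / b ^ 2)
          + v ^ 2 / (c * b * b ^ 2))
      - 2 * N * (N - 1) * r * (1 - 1 / b ^ 2) * (a ^ 2 / (c * b) - 1)
      + 2 * N * (N - 1) * p ^ 2 * (a ^ 2 / (c * b) - 1)
    = (2 * a * (N * q * (1 / a - a) + 2 * N * p * v / (a * b) + N * w / (a * b)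
          - N * p * u / a ^ 2 - N * u * v / (a ^ 2 * b)) * (c * b)
        - a ^ 2 * (2 * N * c
            * ((q + (N - 1) * p ^ 2) * (b / a ^ 2 - b) + (N - 1) * r * (b - 1 / b)
              + 2 * N * p * v / a ^ 2 + w / a ^ 2 + (N - 1) * v ^ 2 / (a ^ 2 * b)
              - p * u * b / a ^ 3 - u * v / a ^ 3)))
      / (c * b) ^ 2 := by
  have hZ : N * q * (1 / a - a) + 2 * N * p * v / (a * b) + N * w / (a * b)
      - N * p * u / a ^ 2 - N * u * v / (a ^ 2 * b)
      = N * (q * (1 - a ^ 2) * a * b + 2 * p * v * a + w * a - p * u * b - u * v)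
        / (a ^ 2 * b) := by
    field_simp
  have hX : (q + (N - 1) * p ^ 2) * (b / a ^ 2 - b) + (N - 1) * r * (b - 1 / b)
      + 2 * N * p * v / a ^ 2 + w / a ^ 2 + (N - 1) * v ^ 2 / (a ^ 2 * b)
      - p * u * b / a ^ 3 - u * v / a ^ 3
      = ((q + (N - 1) * p ^ 2) * a * b ^ 2 * (1 - a ^ 2)
          + (N - 1) * r * (b ^ 2 - 1) * a ^ 3 + 2 * N * p * v * a * b + w * a * b
          + (N - 1) * v ^ 2 * a - p * u * b ^ 2 - u * v * b) / (a ^ 3 * b) := by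
    field_simp
  rw [hZ, hX]
  field_simp
  ring

set_option maxHeartbeats 1000000 in
/-- **The `η`-equation contains no second spatial derivative of `ξ`.**  Let `ψ(s,t)` be
the (positive) spherical component of the background evolving soliton, and write
`P = ψ_s/ψ`, `Q = ψ_{ss}/ψ`, `Rc = 1/ψ²`.  Suppose `ζ, ξ` (with `ζ+1 > 0`, `ξ+1 > 0`)
satisfy the transformed spherically symmetric Ricci flow system: for all `s, t`,

`∂_t ζ = nQ(1/(ζ+1) - (ζ+1)) + 2nP ξ_s/((ζ+1)(ξ+1)) + n ξ_{ss}/((ζ+1)(ξ+1))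
  - nP ζ_s/(ζ+1)² - n ζ_s ξ_s/((ζ+1)²(ξ+1))`,

`∂_t ξ = (Q + (n-1)P²)((ξ+1)/(ζ+1)² - (ξ+1)) + (n-1)Rc((ξ+1) - 1/(ξ+1))
  + 2nP ξ_s/(ζ+1)² + ξ_{ss}/(ζ+1)² + (n-1)ξ_s²/((ζ+1)²(ξ+1))
  - P ζ_s(ξ+1)/(ζ+1)³ - ζ_s ξ_s/(ζ+1)³`.

Then `η := (ζ+1)²/(ξ+1)^{2n} - 1` satisfies

`∂_t η = -2n(n-1)[P²((ξ+1)^{-2n} - 1) + 2P ξ_s (ξ+1)^{-(2n+1)} + Rc(1-(ξ+1)^{-2})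
  + ξ_s²(ξ+1)^{-(2n+2)}] - 2n(n-1)Rc(1-(ξ+1)^{-2})η + 2n(n-1)P²η`,

which involves no `ξ_{ss}`. -/
theorem eta_equation_no_second_derivative
    (n : ℕ) (hn : 2 ≤ n)
    (ψ ζ ξ P Q Rc ζs ξs ξss : ℝ → ℝ → ℝ)
    (hψ : ∀ s t, 0 < ψ s t)
    (hζ : ∀ s t, 0 < ζ s t + 1)
    (hξ : ∀ s t, 0 < ξ s t + 1)
    (hP : ∀ s t, P s t = deriv (fun u => ψ u t) s / ψ s t)
    (hQ : ∀ s t, Q s t = deriv (fun u => deriv (fun v => ψ v t) u) s / ψ s t)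
    (hRc : ∀ s t, Rc s t = 1 / (ψ s t) ^ 2)
    (hζs : ∀ s t, ζs s t = deriv (fun u => ζ u t) s)
    (hξs : ∀ s t, ξs s t = deriv (fun u => ξ u t) s)
    (hξss : ∀ s t, ξss s t = deriv (fun u => deriv (fun v => ξ v t) u) s)
    (hζt : ∀ s t, HasDerivAt (fun τ => ζ s τ)
        ((n : ℝ) * Q s t * (1 / (ζ s t + 1) - (ζ s t + 1))
          + 2 * (n : ℝ) * P s t * ξs s t / ((ζ s t + 1) * (ξ s t + 1))
          + (n : ℝ) * ξss s t / ((ζ s t + 1) * (ξ s t + 1))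
          - (n : ℝ) * P s t * ζs s t / (ζ s t + 1) ^ 2
          - (n : ℝ) * ζs s t * ξs s t / ((ζ s t + 1) ^ 2 * (ξ s t + 1))) t)
    (hξt : ∀ s t, HasDerivAt (fun τ => ξ s τ)
        ((Q s t + ((n : ℝ) - 1) * (P s t) ^ 2)
            * ((ξ s t + 1) / (ζ s t + 1) ^ 2 - (ξ s t + 1))
          + ((n : ℝ) - 1) * Rc s t * ((ξ s t + 1) - 1 / (ξ s t + 1))
          + 2 * (n : ℝ) * P s t * ξs s t / (ζ s t + 1) ^ 2
          + ξss s t / (ζ s t + 1) ^ 2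
          + ((n : ℝ) - 1) * (ξs s t) ^ 2 / ((ζ s t + 1) ^ 2 * (ξ s t + 1))
          - P s t * ζs s t * (ξ s t + 1) / (ζ s t + 1) ^ 3
          - ζs s t * ξs s t / (ζ s t + 1) ^ 3) t) :
    ∀ s t, HasDerivAt
        (fun τ => (ζ s τ + 1) ^ 2 / (ξ s τ + 1) ^ (2 * n) - 1)
        (-2 * (n : ℝ) * ((n : ℝ) - 1)
            * ((P s t) ^ 2 * (1 / (ξ s t + 1) ^ (2 * n) - 1)
              + 2 * P s t * ξs s t / (ξ s t + 1) ^ (2 * n + 1)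
              + Rc s t * (1 - 1 / (ξ s t + 1) ^ 2)
              + (ξs s t) ^ 2 / (ξ s t + 1) ^ (2 * n + 2))
          - 2 * (n : ℝ) * ((n : ℝ) - 1) * Rc s t * (1 - 1 / (ξ s t + 1) ^ 2)
              * ((ζ s t + 1) ^ 2 / (ξ s t + 1) ^ (2 * n) - 1)
          + 2 * (n : ℝ) * ((n : ℝ) - 1) * (P s t) ^ 2
              * ((ζ s t + 1) ^ 2 / (ξ s t + 1) ^ (2 * n) - 1)) t := by
  intro s t
  have ha : ζ s t + 1 ≠ 0 := ne_of_gt (hζ s t)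
  have hb : ξ s t + 1 ≠ 0 := ne_of_gt (hξ s t)
  obtain ⟨m, hm⟩ : ∃ m, 2 * n = m + 1 := ⟨2 * n - 1, by omega⟩
  have hbp : (ξ s t + 1) ^ (2 * n) ≠ 0 := pow_ne_zero _ hb
  have hA : HasDerivAt (fun τ => (ζ s τ + 1) ^ 2)
      (2 * (ζ s t + 1) ^ 1 *
        ((n : ℝ) * Q s t * (1 / (ζ s t + 1) - (ζ s t + 1))
          + 2 * (n : ℝ) * P s t * ξs s t / ((ζ s t + 1) * (ξ s t + 1))
          + (n : ℝ) * ξss s t / ((ζ s t + 1) * (ξ s t + 1))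
          - (n : ℝ) * P s t * ζs s t / (ζ s t + 1) ^ 2
          - (n : ℝ) * ζs s t * ξs s t / ((ζ s t + 1) ^ 2 * (ξ s t + 1)))) t :=
    ((hζt s t).add_const 1).pow 2
  have hB : HasDerivAt (fun τ => (ξ s τ + 1) ^ (2 * n))
      ((2 * n : ℕ) * (ξ s t + 1) ^ (2 * n - 1) *
        ((Q s t + ((n : ℝ) - 1) * (P s t) ^ 2)
            * ((ξ s t + 1) / (ζ s t + 1) ^ 2 - (ξ s t + 1))
          + ((n : ℝ) - 1) * Rc s t * ((ξ s t + 1) - 1 / (ξ s t + 1))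
          + 2 * (n : ℝ) * P s t * ξs s t / (ζ s t + 1) ^ 2
          + ξss s t / (ζ s t + 1) ^ 2
          + ((n : ℝ) - 1) * (ξs s t) ^ 2 / ((ζ s t + 1) ^ 2 * (ξ s t + 1))
          - P s t * ζs s t * (ξ s t + 1) / (ζ s t + 1) ^ 3
          - ζs s t * ξs s t / (ζ s t + 1) ^ 3)) t :=
    ((hξt s t).add_const 1).pow (2 * n)
  have h := (hA.div hB hbp).sub_const 1
  convert h using 1
  · rfl
  · rfl
  · rfl
  rw [hm]
  simp only [Nat.add_sub_cancel]
  rw [show ((m + 1 : ℕ) : ℝ) = 2 * (n : ℝ) from by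
    rw [← hm]; push_cast; ring]
  set a := ζ s t + 1
  set b := ξ s t + 1
  set p := P s t
  set q := Q s t
  set r := Rc s t
  set u := ζs s t
  set v := ξs s t
  set w := ξss s t
  simp only [pow_add, pow_one]
  set c := b ^ m with hcdef
  have hc : c ≠ 0 := pow_ne_zero m hb
  exact eta_key (n : ℝ) a b c p q r u v w ha hb hc
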